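/- For real t ≠ C, ∫_{ℝ²} |U|² dx dy = 2π where U(z) = i(z² − 2i(t−C))/(|z|² + |z² + 2i(t−C)|²); for t = C (with U(z) = iz²/(|z|² + |z|⁴) = i e^{2iφ}/(1+|z|²) away from 0), the integral equals π. -/

import Mathlib

open Complex MeasureTheory Set

/-- z = x + iy -/
noncomputable def zc (x y : ℝ) : ℂ := (x : ℂ) + Complex.I * (y : ℂ)

/-- |z|² + |z² + 2i(t−C)|² -/
noncomputable def denomDS (C t x y : ℝ) : ℝ :=
  (‖zc x y‖)^2 + (‖(zc x y)^2 + 2*Complex.I*((t - C : ℝ) : ℂ)‖)^2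

/-- U = i(z² − 2i(t−C))/(|z|² + |z² + 2i(t−C)|²) -/
noncomputable def UDS (C t : ℝ) : ℝ → ℝ → ℂ := fun x y =>
  Complex.I * ((zc x y)^2 - 2*Complex.I*((t - C : ℝ) : ℂ)) / ((denomDS C t x y : ℝ) : ℂ)

noncomputable def gDS : ℂ → ℝ := fun u => ((1 + ‖u‖ ^ 2) ^ 2)⁻¹

noncomputable def fDS (c : ℂ) : ℂ → ℝ := fun z =>
  (‖z ^ 2 - c‖) ^ 2 / ((‖z‖ ^ 2 + ‖z ^ 2 + c‖ ^ 2) ^ 2)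

noncomputable def wDS (c : ℂ) : ℂ → ℂ := fun z => z + c / z

noncomputable def wderiv (c z : ℂ) : ℂ →L[ℝ] ℂ :=
  LinearMap.toContinuousLinearMap ((Algebra.lmul ℝ ℂ) (1 - c / z ^ 2))

lemma gDS_cont : Continuous gDS := by
  apply Continuous.inv₀
  · continuity
  · intro x
    positivity

lemma gDS_integrable : Integrable gDS := by
  have h4 : (Module.finrank ℝ ℂ : ℝ) < 4 := by
    rw [Complex.finrank_real_complex]; norm_num
  refine ((integrable_one_add_norm (E := ℂ) h4).const_mul 4).mono'
    gDS_cont.aestronglyMeasurable ?_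
  filter_upwards with u
  have h1 : (0:ℝ) < 1 + ‖u‖ := by positivity
  have h2 : (1 + ‖u‖) ^ (-(4:ℝ)) = ((1 + ‖u‖)^4)⁻¹ := by
    rw [Real.rpow_neg h1.le]
    norm_cast
  rw [Real.norm_eq_abs, _root_.abs_of_nonneg (by rw [gDS]; positivity : (0:ℝ) ≤ gDS u), h2, gDS]
  have habs : ‖u‖ = ‖u‖ := rfl
  have key : (1 + ‖u‖)^4 ≤ 4 * (1 + ‖u‖ ^ 2)^2 := by
    rw [habs]
    nlinarith [norm_nonneg u, sq_nonneg (1 - ‖u‖), sq_nonneg ((1-‖u‖)*(1+‖u‖))]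
  have h3 : (0:ℝ) < (1 + ‖u‖ ^ 2)^2 := by positivity
  rw [inv_le_iff_one_le_mul₀ h3]
  have h5 : (0:ℝ) < (1 + ‖u‖)^4 := by positivity
  calc (1:ℝ) = 4 * ((1 + ‖u‖) ^ 4)⁻¹ * ((1 + ‖u‖)^4 / 4) := by field_simp
      _ ≤ 4 * ((1 + ‖u‖) ^ 4)⁻¹ * (1 + ‖u‖ ^ 2) ^ 2 := by
        apply mul_le_mul_of_nonneg_left _ (by positivity)
        linarith [key]

lemma radial_integral : ∫ r in Ioi (0:ℝ), r * ((1 + r ^ 2) ^ 2)⁻¹ = 1/2 := by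
  have hderiv : ∀ r ∈ Ici (0:ℝ), HasDerivAt (fun r : ℝ => -(2 * (1 + r ^ 2))⁻¹)
      (r * ((1 + r ^ 2) ^ 2)⁻¹) r := by
    intro r _
    have h0 : (2 * (1 + r ^ 2) : ℝ) ≠ 0 := by positivity
    have h1 : HasDerivAt (fun r : ℝ => 2 * (1 + r ^ 2)) (2 * (2 * r)) r := by
      have := ((hasDerivAt_pow 2 r).const_add (1:ℝ)).const_mul (2:ℝ)
      simpa using this
    have h2 := (h1.inv h0).neg
    convert h2 using 1
    · rfl
    · rfl
    · funext x; simp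
    field_simp
  have hpos : ∀ r ∈ Ioi (0:ℝ), 0 ≤ r * ((1 + r ^ 2) ^ 2)⁻¹ := by
    intro r hr
    have : (0:ℝ) < r := hr
    positivity
  have htend : Filter.Tendsto (fun r : ℝ => -(2 * (1 + r ^ 2))⁻¹) Filter.atTop (nhds 0) := by
    rw [show (0:ℝ) = -0 by ring]
    apply Filter.Tendsto.neg
    apply Filter.Tendsto.inv_tendsto_atTop
    apply Filter.Tendsto.const_mul_atTop (by norm_num : (0:ℝ) < 2)
    apply Filter.tendsto_atTop_add_const_left
    simpa using tendsto_pow_atTop (n := 2) (by norm_num)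
  have := integral_Ioi_of_hasDerivAt_of_nonneg' hderiv hpos htend
  rw [this]
  norm_num

lemma gDS_integral : ∫ u : ℂ, gDS u = Real.pi := by
  rw [← Complex.integral_comp_polarCoord_symm gDS]
  have heq : ∀ p : ℝ × ℝ, p.1 • gDS (Complex.polarCoord.symm p)
      = (p.1 * ((1 + p.1 ^ 2) ^ 2)⁻¹) * (1:ℝ) := by
    intro p
    rw [gDS, Complex.norm_polarCoord_symm, smul_eq_mul, _root_.sq_abs, mul_one]
  simp_rw [heq]
  rw [polarCoord_target, Measure.volume_eq_prod, setIntegral_prod_mul (fun r : ℝ => r * ((1 + r ^ 2) ^ 2)⁻¹) (fun _ : ℝ => (1:ℝ)), radial_integral]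
  simp only [integral_const, MeasurableSet.univ, Measure.restrict_apply, univ_inter,
    Real.volume_Ioo, smul_eq_mul, mul_one]
  rw [Measure.real, Measure.restrict_apply MeasurableSet.univ, univ_inter, Real.volume_Ioo, ENNReal.toReal_ofReal (by linarith [Real.pi_pos] : (0:ℝ) ≤ Real.pi - -Real.pi)]
  ring

lemma det_wderiv (c z : ℂ) : (wderiv c z).det = Complex.normSq (1 - c / z ^ 2) := by
  rw [wderiv, ContinuousLinearMap.det]
  rw [LinearMap.coe_toContinuousLinearMap]
  rw [← Algebra.norm_apply, Algebra.norm_complex_apply]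

lemma hasfderiv (c : ℂ) {z : ℂ} (hz : z ≠ 0) : HasFDerivAt (wDS c) (wderiv c z) z := by
  have h1 : HasDerivAt (wDS c) (1 - c / z ^ 2) z := by
    have h2 : HasDerivAt (fun z : ℂ => z + c * z⁻¹) (1 + c * (-(z ^ 2)⁻¹)) z :=
      (hasDerivAt_id z).add ((hasDerivAt_inv hz).const_mul c)
    have : wDS c = fun z : ℂ => z + c * z⁻¹ := by
      funext y; rw [wDS, div_eq_mul_inv]
    rw [this]
    convert h2 using 1
    field_simp
    ring
  have h3 := h1.hasFDerivAt.restrictScalars ℝ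
  convert h3 using 1
  · rfl
  · rfl
  apply ContinuousLinearMap.ext
  intro v
  simp [wderiv, Algebra.lmul]
  ring

lemma key_identity (c : ℂ) {z : ℂ} (hz : z ≠ 0) :
    Complex.normSq (1 - c / z ^ 2) * gDS (wDS c z) = fDS c z := by
  have hA : (0:ℝ) < ‖z‖ := norm_pos_iff.mpr hz
  set A := ‖z‖ with hAdef
  have h1 : ‖1 - c / z ^ 2‖ * A ^ 2 = ‖z ^ 2 - c‖ := by
    rw [← norm_pow, ← norm_mul]
    congr 1
    field_simp
  have h2 : ‖z + c / z‖ * A = ‖z ^ 2 + c‖ := by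
    rw [← norm_mul]
    congr 1
    field_simp
  rw [gDS, fDS, wDS, Complex.normSq_eq_norm_sq]
  rw [← h1, ← h2]
  set B := ‖1 - c / z ^ 2‖
  set W := ‖z + c / z‖
  rw [← hAdef]
  have hden : (0:ℝ) < (A ^ 2 + (W * A) ^ 2) ^ 2 := by positivity
  rw [eq_div_iff (ne_of_gt hden)]
  field_simp

lemma circle_image {c d z : ℂ} (hc : c ≠ 0) (hd : d ^ 2 = c)
    (hz : ‖z‖ ^ 2 = ‖c‖) :
    wDS c z ∈ (Submodule.span ℝ {d} : Submodule ℝ ℂ) := by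
  have hd0 : d ≠ 0 := by
    intro h; rw [h] at hd; simp at hd; exact hc hd.symm
  have hz0 : z ≠ 0 := by
    intro h
    rw [h] at hz
    simp at hz
    exact hc (norm_eq_zero.1 hz.symm)
  refine Submodule.mem_span_singleton.2 ⟨2 * (z / d).re, ?_⟩
  rw [Complex.real_smul]
  push_cast
  rw [show ((2:ℂ) * ((z/d).re : ℂ)) = (z/d) + (starRingEnd ℂ) (z/d) by
    rw [Complex.add_conj]; push_cast; ring]
  have h1 : (starRingEnd ℂ) z * z = ((‖c‖ : ℝ) : ℂ) := by
    rw [mul_comm, Complex.mul_conj]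
    norm_cast
    rw [← hz, Complex.sq_norm]
  have h2 : d * (starRingEnd ℂ) d = ((‖c‖ : ℝ) : ℂ) := by
    rw [Complex.mul_conj]
    norm_cast
    rw [← hd, ← Complex.sq_norm, norm_pow]
  rw [wDS, map_div₀]
  have hcd : (starRingEnd ℂ) d ≠ 0 := by simpa using hd0
  field_simp
  linear_combination d * h1 - d * h2 + (starRingEnd ℂ) d * hd

lemma w_injOn {c : ℂ} {s : Set ℂ} (hs0 : ∀ z ∈ s, z ≠ 0)
    (h : ∀ z₁ ∈ s, ∀ z₂ ∈ s, ‖z₁ * z₂‖ ≠ ‖c‖) :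
    Set.InjOn (wDS c) s := by
  intro z₁ h₁ z₂ h₂ he
  by_contra hne
  have hz₁ := hs0 z₁ h₁
  have hz₂ := hs0 z₂ h₂
  have hkey : (z₁ - z₂) * (z₁ * z₂ - c) = 0 := by
    have he' : z₁ + c / z₁ = z₂ + c / z₂ := he
    field_simp at he'
    linear_combination he'
  rcases mul_eq_zero.1 hkey with h' | h'
  · exact hne (sub_eq_zero.1 h')
  · exact h z₁ h₁ z₂ h₂ (by rw [sub_eq_zero.1 h'])

lemma w_surj {c d : ℂ} (hc : c ≠ 0) (hd : d ^ 2 = c) {u : ℂ}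
    (hu : u ∉ (Submodule.span ℝ {d} : Submodule ℝ ℂ)) :
    (∃ z, Real.sqrt (‖c‖) < ‖z‖ ∧ wDS c z = u) ∧
    (∃ z, z ≠ 0 ∧ ‖z‖ < Real.sqrt (‖c‖) ∧ wDS c z = u) := by
  set R := Real.sqrt (‖c‖) with hR
  have hK : (0:ℝ) < ‖c‖ := norm_pos_iff.mpr hc
  have hRpos : (0:ℝ) < R := Real.sqrt_pos.2 hK
  have hRR : R * R = ‖c‖ := Real.mul_self_sqrt hK.le
  obtain ⟨e, he⟩ := IsAlgClosed.exists_pow_nat_eq (u ^ 2 - 4 * c) (n := 2) (by norm_num)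
  set z₁ := (u + e) / 2 with hz₁def
  set z₂ := (u - e) / 2 with hz₂def
  have hprod : z₁ * z₂ = c := by
    rw [hz₁def, hz₂def]
    linear_combination (-1/4 : ℂ) * he
  have hz₁0 : z₁ ≠ 0 := by
    intro h; rw [h, zero_mul] at hprod; exact hc hprod.symm
  have hz₂0 : z₂ ≠ 0 := by
    intro h; rw [h, mul_zero] at hprod; exact hc hprod.symm
  have hw₁ : wDS c z₁ = u := by
    rw [wDS, ← hprod, mul_comm z₁ z₂, mul_div_assoc, div_self hz₁0, mul_one,
      hz₁def, hz₂def]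
    ring
  have hw₂ : wDS c z₂ = u := by
    rw [wDS, ← hprod, mul_div_assoc, div_self hz₂0, mul_one, hz₁def, hz₂def]
    ring
  have habs : ‖z₁‖ * ‖z₂‖ = ‖c‖ := by
    rw [← norm_mul, hprod]
  have hne₁ : ‖z₁‖ ≠ R := by
    intro h
    exact hu (hw₁ ▸ circle_image hc hd (by rw [h, ← hRR]; ring))
  have hne₂ : ‖z₂‖ ≠ R := by
    intro h
    exact hu (hw₂ ▸ circle_image hc hd (by rw [h, ← hRR]; ring))
  rcases lt_or_gt_of_ne hne₁ with h1 | h1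
  · have h2 : R < ‖z₂‖ := by
      rcases lt_or_gt_of_ne hne₂ with h2 | h2
      · exfalso
        have : ‖z₁‖ * ‖z₂‖ < R * R := by
          apply mul_lt_mul' h1.le h2 (norm_nonneg _) hRpos
        rw [habs, hRR] at this
        exact lt_irrefl _ this
      · exact h2
    exact ⟨⟨z₂, h2, hw₂⟩, ⟨z₁, hz₁0, h1, hw₁⟩⟩
  · have h2 : ‖z₂‖ < R := by
      rcases lt_or_gt_of_ne hne₂ with h2 | h2
      · exact h2
      · exfalso
        have : R * R < ‖z₁‖ * ‖z₂‖ :=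
          mul_lt_mul'' h1 h2 hRpos.le hRpos.le
        rw [habs, hRR] at this
        exact lt_irrefl _ this
    exact ⟨⟨z₁, h1, hw₁⟩, ⟨z₂, hz₂0, h2, hw₂⟩⟩

lemma span_ne_top {d : ℂ} (hd0 : d ≠ 0) : (Submodule.span ℝ {d} : Submodule ℝ ℂ) ≠ ⊤ := by
  intro h
  have : Complex.I * d ∈ (Submodule.span ℝ {d} : Submodule ℝ ℂ) := by rw [h]; trivial
  obtain ⟨r, hr⟩ := Submodule.mem_span_singleton.1 this
  rw [Complex.real_smul] at hr
  have : (r : ℂ) = Complex.I := mul_right_cancel₀ hd0 hr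
  have him := congrArg Complex.im this
  simp at him

lemma piece {c d : ℂ} (hc : c ≠ 0) (hd : d ^ 2 = c) (hd0 : d ≠ 0) {s : Set ℂ}
    (hsm : MeasurableSet s) (hs0 : ∀ z ∈ s, z ≠ 0) (hinj : Set.InjOn (wDS c) s)
    (hcover : ∀ u : ℂ, u ∉ (Submodule.span ℝ {d} : Submodule ℝ ℂ) → u ∈ wDS c '' s) :
    IntegrableOn (fDS c) s ∧ ∫ z in s, fDS c z = Real.pi := by
  have hf' : ∀ z ∈ s, HasFDerivWithinAt (wDS c) (wderiv c z) s z :=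
    fun z hz => (hasfderiv c (hs0 z hz)).hasFDerivWithinAt
  have himg : volume (wDS c '' s)ᶜ = 0 := by
    have hsub : (wDS c '' s)ᶜ ⊆ ((Submodule.span ℝ {d} : Submodule ℝ ℂ) : Set ℂ) := by
      intro u hu
      by_contra h
      exact hu (hcover u h)
    exact measure_mono_null hsub (Measure.addHaar_submodule volume _ (span_ne_top hd0))
  have him_ae : wDS c '' s =ᵐ[volume] Set.univ := ae_eq_univ.2 himg
  have hval : ∫ u in wDS c '' s, gDS u = Real.pi := by
    rw [setIntegral_congr_set him_ae, setIntegral_univ, gDS_integral]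
  have hint : IntegrableOn gDS (wDS c '' s) := gDS_integrable.integrableOn
  have hiff := integrableOn_image_iff_integrableOn_abs_det_fderiv_smul volume hsm hf' hinj gDS
  have hcov := integral_image_eq_integral_abs_det_fderiv_smul volume hsm hf' hinj gDS
  have hpt : Set.EqOn (fun z => |(wderiv c z).det| • gDS (wDS c z)) (fDS c) s := by
    intro z hz
    simp only
    rw [det_wderiv, _root_.abs_of_nonneg (Complex.normSq_nonneg _), smul_eq_mul,
      key_identity c (hs0 z hz)]
  constructor
  · exact (hiff.1 hint).congr_fun hpt hsm
  · rw [← setIntegral_congr_fun hsm hpt, ← hcov, hval]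

lemma volume_singleton_complex (a : ℂ) : volume ({a} : Set ℂ) = 0 := by
  rw [← Metric.sphere_zero]
  exact Measure.addHaar_sphere volume a 0

lemma zc_re_im (z : ℂ) : zc z.re z.im = z := by
  rw [zc]; apply Complex.ext <;> simp

lemma UDS_eq (C t x y : ℝ) (hc : (2*Complex.I*((t - C : ℝ):ℂ)) ≠ 0) :
    (‖UDS C t x y‖)^2 = fDS (2*Complex.I*((t - C : ℝ):ℂ)) (zc x y) := by
  set c := 2*Complex.I*((t - C : ℝ):ℂ) with hcdef
  set z := zc x y with hzdef
  have hden : 0 < denomDS C t x y := by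
    rw [denomDS, ← hzdef, ← hcdef]
    rcases eq_or_ne z 0 with h | h
    · have h2 : z ^ 2 + c = c := by rw [h]; ring
      rw [h2]
      have := norm_pos_iff.mpr hc
      positivity
    · have := norm_pos_iff.mpr h
      positivity
  rw [UDS, ← hzdef, ← hcdef, fDS, norm_div, norm_mul, Complex.norm_I, one_mul,
    Complex.norm_real, Real.norm_eq_abs, _root_.abs_of_pos hden, div_pow, denomDS, ← hzdef, ← hcdef]

lemma transfer (C t : ℝ) (F : ℂ → ℝ)
    (h : ∀ z : ℂ, (‖UDS C t z.re z.im‖)^2 = F z) :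
    ∫ p : ℝ × ℝ, (‖UDS C t p.1 p.2‖)^2 = ∫ z : ℂ, F z := by
  rw [← Complex.volume_preserving_equiv_real_prod.integral_comp
    Complex.measurableEquivRealProd.measurableEmbedding
    (fun p : ℝ × ℝ => (‖UDS C t p.1 p.2‖)^2)]
  exact integral_congr_ae (Filter.Eventually.of_forall fun z => h z)

lemma part1 (C t : ℝ) (ht : t ≠ C) :
    ∫ p : ℝ × ℝ, (‖UDS C t p.1 p.2‖)^2 = 2 * Real.pi := by
  have ha : (t - C : ℝ) ≠ 0 := sub_ne_zero.2 ht
  set c : ℂ := 2*Complex.I*((t - C : ℝ):ℂ) with hcdef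
  have hc : c ≠ 0 := by
    rw [hcdef]
    exact mul_ne_zero (mul_ne_zero two_ne_zero Complex.I_ne_zero)
      (Complex.ofReal_ne_zero.2 ha)
  obtain ⟨d, hd⟩ := IsAlgClosed.exists_pow_nat_eq c (n := 2) (by norm_num)
  have hd0 : d ≠ 0 := by
    intro h; apply hc; rw [← hd, h]; ring
  set R := Real.sqrt (‖c‖) with hRdef
  have hK : (0:ℝ) < ‖c‖ := norm_pos_iff.mpr hc
  have hRpos : (0:ℝ) < R := Real.sqrt_pos.2 hK
  have hRR : R * R = ‖c‖ := Real.mul_self_sqrt hK.le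
  set E : Set ℂ := {z : ℂ | R < ‖z‖} with hEdef
  set Iset : Set ℂ := {z : ℂ | ‖z‖ < R} \ {0} with hIdef
  have hEm : MeasurableSet E :=
    (isOpen_lt continuous_const continuous_norm).measurableSet
  have hIm : MeasurableSet Iset :=
    ((isOpen_lt continuous_norm continuous_const).measurableSet).diff
      (measurableSet_singleton 0)
  have hs0E : ∀ z ∈ E, z ≠ 0 := by
    intro z hz h0
    rw [hEdef] at hz
    simp only [Set.mem_setOf_eq, h0] at hz
    simp at hz
    linarith
  have hs0I : ∀ z ∈ Iset, z ≠ 0 := fun z hz => hz.2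
  have hinjE : Set.InjOn (wDS c) E := by
    apply w_injOn hs0E
    intro z₁ h₁ z₂ h₂
    rw [norm_mul]
    apply ne_of_gt
    rw [← hRR]
    exact mul_lt_mul'' h₁ h₂ hRpos.le hRpos.le
  have hinjI : Set.InjOn (wDS c) Iset := by
    apply w_injOn hs0I
    intro z₁ h₁ z₂ h₂
    rw [norm_mul]
    apply ne_of_lt
    rw [← hRR]
    exact mul_lt_mul'' h₁.1 h₂.1 (norm_nonneg _) (norm_nonneg _)
  have hcoverE : ∀ u : ℂ, u ∉ (Submodule.span ℝ {d} : Submodule ℝ ℂ) → u ∈ wDS c '' E := by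
    intro u hu
    obtain ⟨⟨z, hz1, hz2⟩, _⟩ := w_surj hc hd hu
    exact ⟨z, hz1, hz2⟩
  have hcoverI : ∀ u : ℂ, u ∉ (Submodule.span ℝ {d} : Submodule ℝ ℂ) → u ∈ wDS c '' Iset := by
    intro u hu
    obtain ⟨_, ⟨z, hz0, hz1, hz2⟩⟩ := w_surj hc hd hu
    exact ⟨z, ⟨hz1, by simpa using hz0⟩, hz2⟩
  have pE := piece hc hd hd0 hEm hs0E hinjE hcoverE
  have pI := piece hc hd hd0 hIm hs0I hinjI hcoverI
  rw [transfer C t (fDS c) (fun z => UDS_eq C t z.re z.im hc ▸ by rw [zc_re_im])]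
  have hcompl : volume (E ∪ Iset)ᶜ = 0 := by
    have hsub : (E ∪ Iset)ᶜ ⊆ Metric.sphere (0:ℂ) R ∪ {0} := by
      intro z hz
      simp only [Set.mem_compl_iff, Set.mem_union, not_or, hEdef, hIdef, Set.mem_setOf_eq,
        Set.mem_diff, Set.mem_singleton_iff, not_and, not_not] at hz
      obtain ⟨h1, h2⟩ := hz
      rcases lt_or_eq_of_le (not_lt.1 h1) with h | h
      · exact Or.inr (h2 h)
      · left
        rw [Metric.mem_sphere, Complex.dist_eq, sub_zero]
        exact h
    exact measure_mono_null hsub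
      (measure_union_null (Measure.addHaar_sphere volume 0 R) (volume_singleton_complex 0))
  rw [← setIntegral_univ, setIntegral_congr_set (ae_eq_univ.2 hcompl).symm,
    setIntegral_union ?disj hIm pE.1 pI.1, pE.2, pI.2]
  · ring
  case disj =>
    rw [Set.disjoint_left]
    intro z hzE hzI
    rw [hEdef, Set.mem_setOf_eq] at hzE
    exact absurd hzI.1 (not_lt.2 hzE.le)

lemma part2 (C : ℝ) :
    ∫ p : ℝ × ℝ, (‖UDS C C p.1 p.2‖)^2 = Real.pi := by
  rw [transfer C C (fun z => (‖UDS C C z.re z.im‖)^2) (fun z => rfl)]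
  rw [← gDS_integral]
  apply integral_congr_ae
  have hae : ∀ᵐ z : ℂ ∂volume, z ≠ 0 := by
    rw [ae_iff]
    simp only [not_not]
    have : {z : ℂ | z = 0} = {0} := by ext; simp
    rw [this]
    exact volume_singleton_complex 0
  filter_upwards [hae] with z hz
  have h0 : ((C - C : ℝ) : ℂ) = 0 := by norm_num
  have hA : (0:ℝ) < ‖z‖ := norm_pos_iff.mpr hz
  set A := ‖z‖ with hAdef
  have hden : denomDS C C z.re z.im = A ^ 2 + (A ^ 2) ^ 2 := by
    rw [denomDS, zc_re_im, h0]
    simp only [mul_zero, add_zero]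
    rw [norm_pow]
  have hdenpos : (0:ℝ) < A ^ 2 + (A ^ 2) ^ 2 := by positivity
  rw [UDS, zc_re_im, h0]
  simp only [mul_zero, sub_zero]
  rw [norm_div, norm_mul, Complex.norm_I, one_mul, Complex.norm_real, Real.norm_eq_abs, hden,
    _root_.abs_of_pos hdenpos, norm_pow, ← hAdef, gDS, ← hAdef, div_pow]
  field_simp


theorem dsii_willmore_integral (C : ℝ) :
    (∀ t : ℝ, t ≠ C →
      ∫ p : ℝ × ℝ, (‖UDS C t p.1 p.2‖)^2 = 2 * Real.pi) ∧
    (∫ p : ℝ × ℝ, (‖UDS C C p.1 p.2‖)^2 = Real.pi) := by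
  exact ⟨fun t ht => part1 C t ht, part2 C⟩
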